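/- Let 0 < α < 1/2, β > 0, b > 0, and γ ∈ (α, 1/2), and let f be the probability density function of the power Lindley distribution PL(α, β). Define h₂(x) = (x^{1−α}/(1+x^α)) e^{β x^α − b x^γ} sin(b x^γ tan(πγ)) for x > 0 and h₂(x) = 0 for x ≤ 0. Then ∫_0^∞ x^k f(x) h₂(x) dx = 0 for every nonnegative integer k. -/

import Mathlib

open Real MeasureTheory

section PLPaux
open Complex Metric

lemma intA {u r : ℝ} (hu : -1 < u) (hr : 0 < r) :
    IntegrableOn (fun t : ℝ ↦ t ^ u * Real.exp (-(r * t))) (Set.Ioi 0) := by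
  have h0 : (0:ℝ) < u + 1 := by linarith
  have h1 : IntegrableOn (fun x : ℝ ↦ Real.exp (-x) * x ^ u) (Set.Ioi (r * 0)) := by
    rw [mul_zero]; simpa using Real.GammaIntegral_convergent h0
  have h2 : IntegrableOn (fun x : ℝ ↦ Real.exp (-(r*x)) * (r*x) ^ u) (Set.Ioi 0) := by
    have := (integrableOn_Ioi_comp_mul_left_iff
      (fun x : ℝ ↦ Real.exp (-x) * x ^ u) 0 hr).2 h1
    simpa using this
  have h3 := h2.const_mul ((r ^ u)⁻¹)
  apply IntegrableOn.congr_fun h3 ?_ measurableSet_Ioi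
  intro t ht
  have ht' : (0:ℝ) < t := ht
  simp only
  rw [Real.mul_rpow hr.le ht'.le]
  field_simp [(Real.rpow_pos_of_pos hr u).ne']

lemma contB (w z : ℂ) : ContinuousOn
    (fun t : ℝ ↦ (t:ℂ) ^ w * Complex.exp (-z * t)) (Set.Ioi 0) := by
  intro x hx
  have hx' : (0:ℝ) < x := hx
  apply ContinuousAt.continuousWithinAt
  exact (continuousAt_ofReal_cpow_const x w (Or.inr hx'.ne')).mul
    ((Complex.continuous_exp.comp ((continuous_const.mul Complex.continuous_ofReal))).continuousAt)

lemma measB (w z : ℂ) : AEStronglyMeasurable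
    (fun t : ℝ ↦ (t:ℂ) ^ w * Complex.exp (-z * t)) (volume.restrict (Set.Ioi 0)) :=
  (contB w z).aestronglyMeasurable measurableSet_Ioi

lemma intB {s : ℝ} (hs : 0 < s) {z : ℂ} (hz : 0 < z.re) :
    IntegrableOn (fun t : ℝ ↦ (t:ℂ) ^ ((s:ℂ)-1) * Complex.exp (-z * t)) (Set.Ioi 0) := by
  apply Integrable.mono' (intA (by linarith : (-1:ℝ) < s - 1) hz) (measB _ _)
  filter_upwards [self_mem_ae_restrict (measurableSet_Ioi)] with t ht
  have ht' : (0:ℝ) < t := ht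
  rw [norm_mul, Complex.norm_exp,
    Complex.norm_cpow_eq_rpow_re_of_pos ht']
  have h1 : (-z * (t:ℂ)).re = -(z.re * t) := by simp [Complex.mul_re]
  have h2 : ((s:ℂ) - 1).re = s - 1 := by simp
  rw [h1, h2]

lemma hasDerivF {s : ℝ} (hs : 0 < s) {z₀ : ℂ} (hz : 0 < z₀.re) :
    HasDerivAt (fun z : ℂ ↦ ∫ t in Set.Ioi (0:ℝ), (t:ℂ) ^ ((s:ℂ)-1) * Complex.exp (-z * t))
      (∫ t in Set.Ioi (0:ℝ), (t:ℂ) ^ ((s:ℂ)-1) * (Complex.exp (-z₀ * t) * (-t))) z₀ := by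
  have hε : (0:ℝ) < z₀.re / 2 := by linarith
  refine (hasDerivAt_integral_of_dominated_loc_of_deriv_le (F := fun z t ↦
      (t:ℂ) ^ ((s:ℂ)-1) * Complex.exp (-z * t))
      (F' := fun z (t : ℝ) ↦ (t:ℂ) ^ ((s:ℂ)-1) * (Complex.exp (-z * t) * (-t)))
      (bound := fun t : ℝ ↦ t ^ s * Real.exp (-(z₀.re/2 * t)))
      (Metric.ball_mem_nhds z₀ hε) (Filter.Eventually.of_forall fun z ↦ measB _ _) (intB hs hz) ?_ ?_
      (intA (by linarith) hε) ?_).2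
  · -- measurability of F' z₀
    have : AEStronglyMeasurable (fun t : ℝ ↦ (t:ℂ) ^ ((s:ℂ)-1) * Complex.exp (-z₀ * t))
        (volume.restrict (Set.Ioi 0)) := measB _ _
    have h2 : AEStronglyMeasurable (fun t : ℝ ↦ (-t : ℂ)) (volume.restrict (Set.Ioi 0)) :=
      (Complex.continuous_ofReal.neg).aestronglyMeasurable
    have := this.mul h2
    apply this.congr
    filter_upwards with t
    simp only [Pi.mul_apply]
    ring
  · -- bound
    filter_upwards [self_mem_ae_restrict (measurableSet_Ioi)] with t ht
    intro z hzball
    have ht' : (0:ℝ) < t := ht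
    have hzre : z₀.re / 2 ≤ z.re := by
      have := abs_re_le_norm (z - z₀)
      have hd : dist z z₀ < z₀.re / 2 := hzball
      rw [Complex.dist_eq] at hd
      have : |z.re - z₀.re| < z₀.re/2 := by
        calc |z.re - z₀.re| = |(z - z₀).re| := by simp
        _ ≤ ‖z - z₀‖ := abs_re_le_norm _
        _ < z₀.re/2 := hd
      cases' abs_lt.1 this with h1 h2; linarith
    rw [norm_mul, norm_mul,
      Complex.norm_exp, Complex.norm_cpow_eq_rpow_re_of_pos ht']
    have h1 : (-z * (t:ℂ)).re = -(z.re * t) := by simp [Complex.mul_re]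
    have h2 : ((s:ℂ) - 1).re = s - 1 := by simp
    have h3 : ‖(-(t:ℂ))‖ = t := by
      rw [norm_neg]; exact Complex.norm_of_nonneg ht'.le
    rw [h1, h2, h3]
    have h4 : t ^ (s-1) * (Real.exp (-(z.re * t)) * t) = t ^ s * Real.exp (-(z.re * t)) := by
      rw [show t ^ s = t ^ (s-1) * t by rw [← Real.rpow_add_one ht'.ne']; ring_nf]
      ring
    rw [h4]
    apply mul_le_mul_of_nonneg_left _ (Real.rpow_nonneg ht'.le s)
    apply Real.exp_le_exp.2
    nlinarith
  · -- differentiability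
    filter_upwards [self_mem_ae_restrict (measurableSet_Ioi)] with t ht
    intro z hzball
    have hD : HasDerivAt (fun z : ℂ ↦ -z * (t:ℂ)) (-(t:ℂ)) z := by
      simpa using ((hasDerivAt_id z).neg.mul_const ((t:ℂ)))
    exact (hD.cexp).const_mul _

lemma laplace {s : ℝ} (hs : 0 < s) {z : ℂ} (hz : 0 < z.re) :
    ∫ t in Set.Ioi (0:ℝ), (t:ℂ) ^ ((s:ℂ)-1) * Complex.exp (-z * t)
      = (1/z) ^ (s:ℂ) * Complex.Gamma s := by
  set F : ℂ → ℂ := fun z ↦ ∫ t in Set.Ioi (0:ℝ), (t:ℂ) ^ ((s:ℂ)-1) * Complex.exp (-z * t)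
  set G : ℂ → ℂ := fun z ↦ (1/z) ^ (s:ℂ) * Complex.Gamma s
  set U : Set ℂ := {z : ℂ | 0 < z.re}
  have hUo : IsOpen U := isOpen_lt continuous_const Complex.continuous_re
  have hUc : Convex ℝ U := convex_halfSpace_re_gt 0
  have hF : AnalyticOnNhd ℂ F U := by
    apply DifferentiableOn.analyticOnNhd _ hUo
    intro w hw
    exact ((hasDerivF hs hw).differentiableAt).differentiableWithinAt
  have hG : AnalyticOnNhd ℂ G U := by
    apply DifferentiableOn.analyticOnNhd _ hUo
    intro w hw
    have hw' : 0 < w.re := hw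
    have hw0 : w ≠ 0 := fun h ↦ by simp [h] at hw'
    have h1 : DifferentiableAt ℂ (fun z : ℂ ↦ 1/z) w := by
      simpa [one_div] using (differentiableAt_inv hw0)
    have h2 : (1/w) ∈ Complex.slitPlane := by
      left
      rw [one_div, Complex.inv_re]
      exact div_pos hw (Complex.normSq_pos.2 hw0)
    have h3 : DifferentiableAt ℂ (fun z : ℂ ↦ (1/z) ^ (s:ℂ)) w :=
      (h1.cpow (differentiableAt_const _) h2)
    exact (h3.mul_const _).differentiableWithinAt
  have key : ∀ x : ℝ, 0 < x → F x = G x := by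
    intro x hx
    have := Complex.integral_cpow_mul_exp_neg_mul_Ioi
      (a := (s:ℂ)) (by simpa using hs) hx
    calc F x = ∫ t in Set.Ioi (0:ℝ), (t:ℂ) ^ ((s:ℂ)-1) * Complex.exp (-(x * t)) := by
          apply setIntegral_congr_fun measurableSet_Ioi
          intro t _
          norm_num [neg_mul]
      _ = G x := by rw [this]
  -- frequently equal near 1
  have hseq : Filter.Tendsto (fun n : ℕ ↦ ((1 + ((n:ℝ)+1)⁻¹ : ℝ) : ℂ)) Filter.atTop
      (nhdsWithin 1 {(1:ℂ)}ᶜ) := by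
    apply tendsto_nhdsWithin_of_tendsto_nhds_of_eventually_within
    · have t1 : Filter.Tendsto (fun n : ℕ ↦ ((n:ℝ)+1)⁻¹) Filter.atTop (nhds 0) := by
        simpa [one_div] using tendsto_one_div_add_atTop_nhds_zero_nat (𝕜 := ℝ)
      have t2 := (tendsto_const_nhds (x := (1:ℝ)) (f := (Filter.atTop : Filter ℕ))).add t1
      rw [add_zero] at t2
      have t3 := (Complex.continuous_ofReal.tendsto 1).comp t2
      have h1c : ((1:ℝ):ℂ) = 1 := by norm_num
      rw [h1c] at t3
      exact t3
    · filter_upwards with n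
      simp only [Set.mem_compl_iff, Set.mem_singleton_iff]
      intro h
      have : (1 + ((n:ℝ)+1)⁻¹ : ℝ) = 1 := by exact_mod_cast h
      have hpos : (0:ℝ) < ((n:ℝ)+1)⁻¹ := by positivity
      linarith
  have hfreq : ∃ᶠ w in nhdsWithin 1 {(1:ℂ)}ᶜ, F w = G w := by
    apply hseq.frequently
    apply Filter.Frequently.of_forall
    intro n
    exact key _ (by positivity)
  have h1U : (1:ℂ) ∈ U := by simp [U]
  have := hF.eqOn_of_preconnected_of_frequently_eq hG (hUc.isPreconnected) h1U hfreq
  exact this hz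

lemma aux_wz {b cs sn : ℝ} (hb : 0 < b) (hcs : 0 < cs) (h2 : sn^2 + cs^2 = 1) :
    (((cs / b : ℝ) : ℂ) * (((cs : ℝ) : ℂ) + ((sn : ℝ) : ℂ) * Complex.I)) *
      ((b:ℂ) - ((b * (sn / cs) : ℝ) : ℂ) * Complex.I) = 1 := by
  have hb' : (b:ℂ) ≠ 0 := by exact_mod_cast hb.ne'
  have hc' : ((cs:ℝ):ℂ) ≠ 0 := by exact_mod_cast hcs.ne'
  have h2c : ((sn:ℝ):ℂ)^2 + ((cs:ℝ):ℂ)^2 = 1 := by exact_mod_cast h2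
  push_cast
  field_simp
  linear_combination h2c - ((sn:ℂ)^2) * Complex.I_sq

lemma im_zero {b γ : ℝ} (hb : 0 < b) (hγ0 : 0 < γ) (hγ : γ < 1/2) (k : ℕ) :
    ((1 / ((b:ℂ) - ((b * Real.tan (π*γ) : ℝ) : ℂ) * Complex.I)) ^ (((((k:ℝ)+1)/γ : ℝ)) : ℂ)
      * Complex.Gamma ((((k:ℝ)+1)/γ : ℝ) : ℂ)).im = 0 := by
  set θ := π * γ with hθdef
  set s : ℝ := ((k:ℝ)+1)/γ with hsdef
  have hθ1 : 0 < θ := by positivity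
  have hθ2 : θ < π / 2 := by
    rw [hθdef]
    calc π * γ < π * (1/2) := mul_lt_mul_of_pos_left hγ Real.pi_pos
      _ = π / 2 := by ring
  have hcos : 0 < Real.cos θ := Real.cos_pos_of_mem_Ioo ⟨by linarith [Real.pi_pos], hθ2⟩
  set z : ℂ := (b:ℂ) - ((b * Real.tan θ : ℝ) : ℂ) * Complex.I with hzdef
  set w : ℂ := ((Real.cos θ / b : ℝ) : ℂ) *
    (((Real.cos θ : ℝ) : ℂ) + ((Real.sin θ : ℝ) : ℂ) * Complex.I) with hwdef
  have hwz : w * z = 1 := by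
    rw [hwdef, hzdef, Real.tan_eq_sin_div_cos]
    exact aux_wz hb hcos (Real.sin_sq_add_cos_sq θ)
  have hw : 1 / z = w := (eq_one_div_of_mul_eq_one_left hwz).symm
  rw [hw, Complex.Gamma_ofReal]
  have hw0 : w ≠ 0 := by
    intro h; rw [h, zero_mul] at hwz; exact one_ne_zero hwz.symm
  suffices h : (w ^ ((s:ℝ):ℂ)).im = 0 by
    simp [Complex.mul_im, h]
  rw [Complex.cpow_def_of_ne_zero hw0, Complex.exp_im]
  have harg : w.arg = θ := by
    rw [hwdef, Complex.ofReal_cos, Complex.ofReal_sin]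
    exact Complex.arg_mul_cos_add_sin_mul_I (div_pos hcos hb)
      ⟨by linarith [Real.pi_pos], le_of_lt (hθ2.trans (by linarith [Real.pi_pos]))⟩
  have him : (Complex.log w * ((s:ℝ):ℂ)).im = θ * s := by
    simp [Complex.mul_im, Complex.log_im, harg]
  rw [him]
  have hθs : θ * s = ((k+1 : ℕ) : ℝ) * π := by
    rw [hθdef, hsdef]
    field_simp
    push_cast
    ring
  rw [hθs, Real.sin_nat_mul_pi, mul_zero]

end PLPaux

/-- For `0 < α < 1/2`, `β > 0`, `b > 0` and `γ ∈ (α, 1/2)`, the function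
`h₂(x) = (x^{1-α}/(1+x^α)) e^{β x^α - b x^γ} sin(b x^γ tan(πγ))` (for `x > 0`, zero
otherwise) has vanishing moments against the power Lindley density `f`:
`∫_0^∞ x^k f(x) h₂(x) dx = 0` for every nonnegative integer `k`. -/
theorem power_lindley_perturbation_two (α β b γ : ℝ) (hα0 : 0 < α) (hα : α < 1 / 2)
    (hβ : 0 < β) (hb : 0 < b) (hγ1 : α < γ) (hγ2 : γ < 1 / 2)
    (f h₂ : ℝ → ℝ)
    (hf : ∀ x : ℝ, f x = if 0 < x then
      (α * β ^ 2 / (β + 1)) * (1 + x ^ α) * x ^ (α - 1) * Real.exp (-β * x ^ α) else 0)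
    (hh : ∀ x : ℝ, h₂ x = if 0 < x then
      x ^ (1 - α) / (1 + x ^ α) * Real.exp (β * x ^ α - b * x ^ γ) *
        Real.sin (b * x ^ γ * Real.tan (π * γ)) else 0) :
    ∀ k : ℕ, ∫ x in Set.Ioi (0 : ℝ), x ^ k * f x * h₂ x = 0 := by
  intro k
  have hγ0 : 0 < γ := hα0.trans hγ1
  set c : ℝ := b * Real.tan (π * γ) with hcdef
  set s : ℝ := ((k:ℝ)+1)/γ with hsdef
  have hs : 0 < s := by positivity
  set C₀ : ℝ := α * β ^ 2 / (β + 1) with hC₀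
  -- Step 1 : simplify the integrand
  have step1 : ∫ x in Set.Ioi (0:ℝ), x ^ k * f x * h₂ x
      = ∫ x in Set.Ioi (0:ℝ), C₀ * (x ^ (k:ℝ) * Real.exp (-(b * x ^ γ)) * Real.sin (c * x ^ γ)) := by
    apply setIntegral_congr_fun measurableSet_Ioi
    intro x hx
    have hx' : (0:ℝ) < x := hx
    show x ^ k * f x * h₂ x = C₀ * (x ^ (k:ℝ) * Real.exp (-(b * x ^ γ)) * Real.sin (c * x ^ γ))
    rw [hf x, hh x, if_pos hx', if_pos hx']
    have h1 : (0:ℝ) < 1 + x ^ α := by positivity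
    have h2 : x ^ (α-1) * x ^ (1-α) = 1 := by
      rw [← Real.rpow_add hx']; norm_num
    have h3 : Real.exp (-β * x ^ α) * Real.exp (β * x ^ α - b * x ^ γ)
        = Real.exp (-(b * x ^ γ)) := by
      rw [← Real.exp_add]; ring_nf
    have h4 : (x : ℝ) ^ (k : ℕ) = x ^ (k:ℝ) := (Real.rpow_natCast x k).symm
    calc x ^ k * (C₀ * (1 + x ^ α) * x ^ (α-1) * Real.exp (-β * x ^ α)) *
          (x ^ (1-α) / (1 + x ^ α) * Real.exp (β * x ^ α - b * x ^ γ) *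
            Real.sin (b * x ^ γ * Real.tan (π * γ)))
        = C₀ * ((x:ℝ) ^ (k:ℕ) * (Real.exp (-β * x ^ α) * Real.exp (β * x ^ α - b * x ^ γ)) *
            Real.sin (b * x ^ γ * Real.tan (π * γ))) *
            ((1 + x ^ α) / (1 + x ^ α)) * (x ^ (α-1) * x ^ (1-α)) := by ring
      _ = C₀ * (x ^ (k:ℝ) * Real.exp (-(b * x ^ γ)) * Real.sin (c * x ^ γ)) := by
          rw [h2, h3, div_self h1.ne', h4, hcdef]
          ring_nf
  rw [step1, MeasureTheory.integral_const_mul]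
  -- Step 2 : substitution  y = x ^ γ
  set g : ℝ → ℝ := fun y ↦ y ^ (s - 1) * Real.exp (-(b * y)) * Real.sin (c * y) with hg
  have hsub : (∫ x in Set.Ioi (0:ℝ), (|γ| * x ^ (γ - 1)) • g (x ^ γ))
      = ∫ y in Set.Ioi (0:ℝ), g y := integral_comp_rpow_Ioi g hγ0.ne'
  have step2 : ∫ x in Set.Ioi (0:ℝ), x ^ (k:ℝ) * Real.exp (-(b * x ^ γ)) * Real.sin (c * x ^ γ)
      = γ⁻¹ * ∫ y in Set.Ioi (0:ℝ), g y := by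
    rw [← hsub, ← MeasureTheory.integral_const_mul]
    apply setIntegral_congr_fun measurableSet_Ioi
    intro x hx
    have hx' : (0:ℝ) < x := hx
    have e1 : (x ^ γ) ^ (s - 1) = x ^ (γ * (s-1)) := (Real.rpow_mul hx'.le γ (s-1)).symm
    have e2 : γ * (s - 1) = (k:ℝ) + 1 - γ := by
      rw [hsdef]; field_simp
    have e3 : x ^ (γ - 1) * x ^ ((k:ℝ) + 1 - γ) = x ^ (k:ℝ) := by
      rw [← Real.rpow_add hx']; norm_num
    simp only [hg, smul_eq_mul]
    rw [e1, e2, abs_of_pos hγ0, ← e3]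
    field_simp
  rw [step2]
  -- Step 3 : the y-integral vanishes
  set z : ℂ := (b:ℂ) - ((c : ℝ) : ℂ) * Complex.I with hzdef
  have hzre : 0 < z.re := by simp [hzdef, hb]
  have hint := intB hs hzre
  have step3 : ∫ y in Set.Ioi (0:ℝ), g y
      = (∫ y in Set.Ioi (0:ℝ), (y:ℂ) ^ ((s:ℂ)-1) * Complex.exp (-z * y)).im := by
    rw [← RCLike.im_eq_complex_im, ← integral_im hint]
    apply setIntegral_congr_fun measurableSet_Ioi
    intro y hy
    have hy' : (0:ℝ) < y := hy
    have e1 : (y:ℂ) ^ ((s:ℂ)-1) = ((y ^ (s-1) : ℝ) : ℂ) := by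
      rw [Complex.ofReal_cpow hy'.le]
      push_cast
      ring_nf
    have e2 : (-z * (y:ℂ)).re = -(b*y) := by simp [hzdef, Complex.mul_re]
    have e3 : (-z * (y:ℂ)).im = c*y := by simp [hzdef, Complex.mul_im]
    simp only [hg, RCLike.im_eq_complex_im, e1, Complex.mul_im, Complex.ofReal_re,
      Complex.ofReal_im, Complex.exp_im, Complex.exp_re, e2, e3, zero_mul, add_zero]
    ring
  rw [step3, laplace hs hzre]
  rw [show ((s:ℝ):ℂ) = (((((k:ℝ)+1)/γ : ℝ)) : ℂ) by rw [hsdef]]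
  rw [hzdef, hcdef]
  rw [im_zero hb hγ0 hγ2 k, mul_zero, mul_zero]
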